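/- Let φ : Fin D → ℝ with φ i ≥ 0, ∑ i, (φ i)² ≤ A², (1/2) ∑_{i ≠ j} (φ i − φ j)² ≥ ϑ², w : Fin D → ℝ, and y ∈ ℝ with |y| ≤ B. Then |∑ i, w i · φ i − y| ≤ (max_i |w i|)·Real.sqrt(D·A² − ϑ²) + B. -/

import Mathlib

open Finset

theorem l1_regression_energy_bound {D : ℕ} (hD : 0 < D) (A ϑ B : ℝ)
    (φ : Fin D → ℝ)
    (hpos : ∀ i, 0 ≤ φ i)
    (hnorm : ∑ i, (φ i)^2 ≤ A^2)
    (hdiv : (1/2) * (∑ i, ∑ j, if i ≠ j then (φ i - φ j)^2 else 0) ≥ ϑ^2)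
    (w : Fin D → ℝ) (y : ℝ) (hy : |y| ≤ B) :
    |∑ i, w i * φ i - y| ≤
      (Finset.univ.sup' ⟨(⟨0, hD⟩ : Fin D), Finset.mem_univ _⟩ (fun i => |w i|))
        * Real.sqrt ((D : ℝ) * A^2 - ϑ^2) + B := by
  set M := (Finset.univ.sup' ⟨(⟨0, hD⟩ : Fin D), Finset.mem_univ _⟩ (fun i => |w i|)) with hMdef
  have hM : ∀ i : Fin D, |w i| ≤ M := fun i => Finset.le_sup' (fun i => |w i|) (Finset.mem_univ i)
  have hM0 : 0 ≤ M := le_trans (abs_nonneg _) (hM ⟨0, hD⟩)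
  set S := ∑ i, φ i with hSdef
  have hS0 : 0 ≤ S := Finset.sum_nonneg fun i _ => hpos i
  have hident : (∑ i, ∑ j, if i ≠ j then (φ i - φ j)^2 else 0)
      = 2 * D * (∑ i, (φ i)^2) - 2 * S^2 := by
    have h1 : (∑ i, ∑ j, if i ≠ j then (φ i - φ j)^2 else 0)
        = ∑ i : Fin D, ∑ j : Fin D, (φ i - φ j)^2 := by
      apply Finset.sum_congr rfl; intro i _
      apply Finset.sum_congr rfl; intro j _
      by_cases h : i = j <;> simp [h]
    rw [h1]
    have : ∀ i j : Fin D, (φ i - φ j)^2 = (φ i)^2 - 2 * (φ i * φ j) + (φ j)^2 := by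
      intro i j; ring
    simp only [this, Finset.sum_add_distrib, Finset.sum_sub_distrib,
      Finset.sum_const, Finset.card_univ, Fintype.card_fin, nsmul_eq_mul,
      ← Finset.mul_sum, ← Finset.sum_mul]
    rw [hSdef]
    ring
  have hSsq : S^2 ≤ (D : ℝ) * A^2 - ϑ^2 := by
    have : ϑ^2 ≤ (D : ℝ) * (∑ i, (φ i)^2) - S^2 := by
      calc ϑ^2 ≤ (1/2) * (∑ i, ∑ j, if i ≠ j then (φ i - φ j)^2 else 0) := hdiv
        _ = (D : ℝ) * (∑ i, (φ i)^2) - S^2 := by rw [hident]; ring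
    have h2 : (D : ℝ) * (∑ i, (φ i)^2) ≤ (D : ℝ) * A^2 :=
      mul_le_mul_of_nonneg_left hnorm (Nat.cast_nonneg D)
    linarith
  have hSle : S ≤ Real.sqrt ((D : ℝ) * A^2 - ϑ^2) := by
    rw [show S = Real.sqrt (S^2) by rw [Real.sqrt_sq hS0]]
    exact Real.sqrt_le_sqrt hSsq
  calc |∑ i, w i * φ i - y| ≤ |∑ i, w i * φ i| + |y| := abs_sub _ _
    _ ≤ (∑ i, |w i * φ i|) + B := by
        exact add_le_add (Finset.abs_sum_le_sum_abs _ _) hy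
    _ ≤ (∑ i, M * φ i) + B := by
        gcongr with i
        rw [abs_mul, abs_of_nonneg (hpos i)]
        exact mul_le_mul_of_nonneg_right (hM i) (hpos i)
    _ = M * S + B := by rw [← Finset.mul_sum]
    _ ≤ M * Real.sqrt ((D : ℝ) * A^2 - ϑ^2) + B := by
        exact add_le_add_left (mul_le_mul_of_nonneg_left hSle hM0) B
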